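/- Let H be a separable complex Hilbert space and T a bounded linear operator on the k-fold tensor power H^{⊗k}. Then the function g_T(u) = ⟨u^{⊗k} | T | u^{⊗k}⟩ restricted to the ball {u ∈ H : ‖u‖² ≤ K} is Lipschitz with Lipschitz constant at most 2k K^{k−1/2} ‖T‖. -/

import Mathlib

open scoped InnerProductSpace

lemma normsq_complex (w : ℂ) : ‖w‖^2 = w.re^2 + w.im^2 := by
  rw [Complex.sq_norm, Complex.normSq_apply]; ring

lemma sqrt_pow_aux (x : ℝ) (hx : 0 ≤ x) : ∀ n : ℕ, Real.sqrt (x ^ n) = Real.sqrt x ^ n := by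
  intro n; induction n with
  | zero => simp
  | succ m ih => rw [pow_succ, pow_succ, Real.sqrt_mul (pow_nonneg hx m), ih]

lemma nonneg_aux (X Z : ℝ) (Y : ℂ) (hX : 0 ≤ X) (hZ : 0 ≤ Z) (hY : ‖Y‖^2 ≤ X*Z) :
    0 ≤ X + Z - 2*Y.re := by
  have h1 : Y.re ≤ ‖Y‖ := by exact Complex.re_le_norm Y
  have h2 : ‖Y‖ ≤ Real.sqrt (X*Z) := Real.le_sqrt_of_sq_le hY
  have h3 : Real.sqrt (X*Z) = Real.sqrt X * Real.sqrt Z := Real.sqrt_mul hX Z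
  nlinarith [sq_nonneg (Real.sqrt X - Real.sqrt Z), Real.sq_sqrt hX, Real.sq_sqrt hZ]

/-- scalar form of the triangle inequality `‖p⊗u − q⊗v‖ ≤ ‖p−q‖‖u‖ + ‖q‖‖u−v‖`. -/
lemma key_step (x z X Z : ℝ) (y Y : ℂ) (hx : 0 ≤ x) (hz : 0 ≤ z) (hX : 0 ≤ X) (hZ : 0 ≤ Z)
    (hy : ‖y‖^2 ≤ x*z) (hY : ‖Y‖^2 ≤ X*Z) :
    x*X + z*Z - 2*(Y*y).re ≤
      (Real.sqrt (x*(X+Z-2*Y.re)) + Real.sqrt (Z*(x+z-2*y.re)))^2 := by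
  set N : ℝ := X+Z-2*Y.re with hNdef
  set D : ℝ := x+z-2*y.re with hDdef
  have hy' := normsq_complex y; have hY' := normsq_complex Y
  have hN : 0 ≤ N := nonneg_aux X Z Y hX hZ hY
  have hD : 0 ≤ D := nonneg_aux x z y hx hz hy
  have hCS1 : ‖(x:ℂ)-y‖^2 ≤ x*D := by
    rw [normsq_complex]
    simp only [Complex.sub_re, Complex.sub_im, Complex.ofReal_re, Complex.ofReal_im, hDdef]
    nlinarith [hy, hy']
  have hCS2 : ‖(Z:ℂ)-Y‖^2 ≤ Z*N := by
    rw [normsq_complex]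
    simp only [Complex.sub_re, Complex.sub_im, Complex.ofReal_re, Complex.ofReal_im, hNdef]
    nlinarith [hY, hY']
  have h1 : ‖(x:ℂ)-y‖ ≤ Real.sqrt (x*D) := Real.le_sqrt_of_sq_le hCS1
  have h2 : ‖(Z:ℂ)-Y‖ ≤ Real.sqrt (Z*N) := Real.le_sqrt_of_sq_le hCS2
  have hre : x*X + z*Z - 2*(Y*y).re - (x*N + Z*D) = -2*((((x:ℂ)-y)*((Z:ℂ)-Y)).re) := by
    simp only [Complex.mul_re, Complex.sub_re, Complex.sub_im, Complex.ofReal_re,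
      Complex.ofReal_im, hNdef, hDdef]
    ring
  have habs : -((((x:ℂ)-y)*((Z:ℂ)-Y)).re) ≤ Real.sqrt (x*D) * Real.sqrt (Z*N) := by
    calc -((((x:ℂ)-y)*((Z:ℂ)-Y)).re) ≤ ‖((x:ℂ)-y)*((Z:ℂ)-Y)‖ := by
          have h := Complex.abs_re_le_norm (((x:ℂ)-y)*((Z:ℂ)-Y))
          have := neg_abs_le ((((x:ℂ)-y)*((Z:ℂ)-Y)).re)
          linarith
      _ = ‖(x:ℂ)-y‖ * ‖(Z:ℂ)-Y‖ := norm_mul _ _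
      _ ≤ Real.sqrt (x*D) * Real.sqrt (Z*N) :=
          mul_le_mul h1 h2 (norm_nonneg _) (Real.sqrt_nonneg _)
  have hswap : Real.sqrt (x*D) * Real.sqrt (Z*N) = Real.sqrt (x*N) * Real.sqrt (Z*D) := by
    rw [Real.sqrt_mul hx, Real.sqrt_mul hZ, Real.sqrt_mul hx, Real.sqrt_mul hZ]; ring
  have hsq : (Real.sqrt (x*N) + Real.sqrt (Z*D))^2
      = x*N + Z*D + 2 * (Real.sqrt (x*N) * Real.sqrt (Z*D)) := by
    rw [add_sq, Real.sq_sqrt (mul_nonneg hx hN), Real.sq_sqrt (mul_nonneg hZ hD)]; ring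
  rw [hsq]
  rw [hswap] at habs
  linarith [hre, habs]

/-- the telescoping estimate, in scalar form, by induction. -/
lemma iter_step (x z K : ℝ) (y : ℂ) (hx : 0 ≤ x) (hz : 0 ≤ z) (hy : ‖y‖^2 ≤ x*z)
    (hxK : x ≤ K) (hzK : z ≤ K) :
    ∀ m : ℕ, Real.sqrt (x^(m+1) + z^(m+1) - 2*((y^(m+1)).re))
      ≤ (m+1) * Real.sqrt K ^ m * Real.sqrt (x+z-2*y.re) := by
  have hK : 0 ≤ K := le_trans hx hxK
  intro m; induction m with
  | zero => simp
  | succ m ih =>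
    have hXp : (0:ℝ) ≤ x^(m+1) := pow_nonneg hx _
    have hZp : (0:ℝ) ≤ z^(m+1) := pow_nonneg hz _
    have hYp : ‖y^(m+1)‖^2 ≤ x^(m+1) * z^(m+1) := by
      have he : ‖y^(m+1)‖^2 = (‖y‖^2)^(m+1) := by rw [norm_pow]; ring
      rw [he, ← mul_pow]
      exact pow_le_pow_left₀ (sq_nonneg _) hy _
    have hkey := key_step x z (x^(m+1)) (z^(m+1)) y (y^(m+1)) hx hz hXp hZp hy hYp
    have hN : 0 ≤ x^(m+1) + z^(m+1) - 2*((y^(m+1)).re) := nonneg_aux _ _ _ hXp hZp hYp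
    have hD : 0 ≤ x + z - 2*y.re := nonneg_aux x z y hx hz hy
    have hAB : 0 ≤ Real.sqrt (x*(x^(m+1) + z^(m+1) - 2*(y^(m+1)).re))
        + Real.sqrt (z^(m+1)*(x+z-2*y.re)) :=
      add_nonneg (Real.sqrt_nonneg _) (Real.sqrt_nonneg _)
    have hgoal1 : Real.sqrt (x^(m+2) + z^(m+2) - 2*((y^(m+2)).re))
        ≤ Real.sqrt (x*(x^(m+1) + z^(m+1) - 2*(y^(m+1)).re))
          + Real.sqrt (z^(m+1)*(x+z-2*y.re)) := by
      have heq : x^(m+2) + z^(m+2) - 2*((y^(m+2)).re)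
          = x*x^(m+1) + z*z^(m+1) - 2*((y^(m+1)*y).re) := by
        rw [show y^(m+1)*y = y^(m+2) by ring]; ring
      rw [heq]
      calc Real.sqrt (x*x^(m+1) + z*z^(m+1) - 2*((y^(m+1)*y).re))
          ≤ Real.sqrt ((Real.sqrt (x*(x^(m+1) + z^(m+1) - 2*(y^(m+1)).re))
              + Real.sqrt (z^(m+1)*(x+z-2*y.re)))^2) := Real.sqrt_le_sqrt hkey
        _ = _ := Real.sqrt_sq hAB
    have hA : Real.sqrt (x*(x^(m+1) + z^(m+1) - 2*(y^(m+1)).re))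
        ≤ Real.sqrt K * ((m+1) * Real.sqrt K ^ m * Real.sqrt (x+z-2*y.re)) := by
      rw [Real.sqrt_mul hx]
      exact mul_le_mul (Real.sqrt_le_sqrt hxK) ih (Real.sqrt_nonneg _) (Real.sqrt_nonneg _)
    have hB : Real.sqrt (z^(m+1)*(x+z-2*y.re)) ≤ Real.sqrt K ^ (m+1) * Real.sqrt (x+z-2*y.re) := by
      rw [Real.sqrt_mul hZp]
      apply mul_le_mul_of_nonneg_right _ (Real.sqrt_nonneg _)
      rw [sqrt_pow_aux z hz]
      exact pow_le_pow_left₀ (Real.sqrt_nonneg _) (Real.sqrt_le_sqrt hzK) _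
    have : ((m:ℝ)+1+1) * Real.sqrt K ^ (m+1) * Real.sqrt (x+z-2*y.re)
        = Real.sqrt K * ((m+1) * Real.sqrt K ^ m * Real.sqrt (x+z-2*y.re))
          + Real.sqrt K ^ (m+1) * Real.sqrt (x+z-2*y.re) := by ring
    push_cast
    rw [this]
    exact le_trans hgoal1 (add_le_add hA hB)

/-- Let `H` be a separable complex Hilbert space and `T` a bounded operator on the `k`-fold
tensor power of `H` (modelled by a Hilbert space `E` together with the tensor-power map
`tpow : H → E`, characterized by `⟪tpow u, tpow v⟫ = ⟪u,v⟫^k`).  Then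
`g_T(u) = ⟨u^{⊗k} | T | u^{⊗k}⟩` restricted to the ball `{u : ‖u‖² ≤ K}` is Lipschitz with
constant at most `2k K^{k−1/2} ‖T‖`. -/
theorem stmt3 {H E : Type*}
    [NormedAddCommGroup H] [InnerProductSpace ℂ H] [CompleteSpace H] [TopologicalSpace.SeparableSpace H]
    [NormedAddCommGroup E] [InnerProductSpace ℂ E] [CompleteSpace E]
    (k : ℕ) (hk : 0 < k) (tpow : H → E)
    (htpow : ∀ u v : H, ⟪tpow u, tpow v⟫_ℂ = (⟪u, v⟫_ℂ) ^ k)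
    (T : E →L[ℂ] E) (K : ℝ) (hK : 0 < K) :
    ∀ u v : H, ‖u‖ ^ 2 ≤ K → ‖v‖ ^ 2 ≤ K →
      ‖⟪tpow u, T (tpow u)⟫_ℂ - ⟪tpow v, T (tpow v)⟫_ℂ‖
        ≤ 2 * k * K ^ ((k : ℝ) - 1/2) * ‖T‖ * ‖u - v‖ := by
  intro u v hu hv
  set a := tpow u with ha
  set b := tpow v with hb
  set x := ‖u‖^2 with hxdef
  set z := ‖v‖^2 with hzdef
  set y := ⟪u, v⟫_ℂ with hydef
  have hx : 0 ≤ x := sq_nonneg _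
  have hz : 0 ≤ z := sq_nonneg _
  have hy : ‖y‖^2 ≤ x * z := by
    have := norm_inner_le_norm (𝕜 := ℂ) u v
    nlinarith [norm_nonneg u, norm_nonneg v, norm_nonneg y]
  -- norms of tensor powers
  have hnormsq : ∀ w : H, ‖tpow w‖^2 = (‖w‖^2)^k := by
    intro w
    have h1 : (⟪tpow w, tpow w⟫_ℂ) = ((‖w‖^2 : ℝ) : ℂ)^k := by
      rw [htpow, inner_self_eq_norm_sq_to_K]; norm_cast
    have h2 : (⟪tpow w, tpow w⟫_ℂ) = ((‖tpow w‖^2 : ℝ) : ℂ) := by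
      rw [inner_self_eq_norm_sq_to_K]; norm_cast
    have := h2.symm.trans h1
    exact_mod_cast this
  have hinner_ab : (⟪a, b⟫_ℂ) = y^k := htpow u v
  -- ‖a-b‖² as scalars
  have hab : ‖a - b‖^2 = x^k + z^k - 2*((y^k).re) := by
    rw [@norm_sub_sq ℂ, hinner_ab, hnormsq, hnormsq]
    simp only [RCLike.re_to_complex]
    ring
  have hDnorm : ‖u - v‖^2 = x + z - 2*y.re := by
    rw [@norm_sub_sq ℂ]
    simp only [RCLike.re_to_complex, hydef]
    ring
  -- the Lipschitz estimate for tensor powers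
  have hdist : ‖a - b‖ ≤ k * Real.sqrt K ^ (k-1) * ‖u - v‖ := by
    obtain ⟨m, rfl⟩ : ∃ m, k = m + 1 := ⟨k - 1, (Nat.succ_pred_eq_of_pos hk).symm⟩
    have := iter_step x z K y hx hz hy hu hv m
    rw [← hDnorm, Real.sqrt_sq (norm_nonneg _)] at this
    calc ‖a - b‖ = Real.sqrt (‖a - b‖^2) := (Real.sqrt_sq (norm_nonneg _)).symm
      _ = Real.sqrt (x^(m+1) + z^(m+1) - 2*((y^(m+1)).re)) := by rw [hab]
      _ ≤ ((m:ℝ)+1) * Real.sqrt K ^ m * ‖u - v‖ := this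
      _ = ((m+1 : ℕ) : ℝ) * Real.sqrt K ^ ((m+1)-1) * ‖u - v‖ := by push_cast; ring_nf
  have hna : ‖a‖ ≤ Real.sqrt K ^ k := by
    have h1 : ‖a‖^2 ≤ K^k := by rw [hnormsq]; exact pow_le_pow_left₀ hx hu k
    have : ‖a‖ ≤ Real.sqrt (K^k) := Real.le_sqrt_of_sq_le h1
    rwa [sqrt_pow_aux K hK.le] at this
  have hnb : ‖b‖ ≤ Real.sqrt K ^ k := by
    have h1 : ‖b‖^2 ≤ K^k := by rw [hnormsq]; exact pow_le_pow_left₀ hz hv k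
    have : ‖b‖ ≤ Real.sqrt (K^k) := Real.le_sqrt_of_sq_le h1
    rwa [sqrt_pow_aux K hK.le] at this
  -- split the quadratic form difference
  have hsplit : (⟪a, T a⟫_ℂ) - (⟪b, T b⟫_ℂ) = (⟪a - b, T a⟫_ℂ) + (⟪b, T (a - b)⟫_ℂ) := by
    rw [inner_sub_left, map_sub, inner_sub_right]
    ring
  have h1 : ‖(⟪a - b, T a⟫_ℂ)‖ ≤ ‖a - b‖ * (‖T‖ * ‖a‖) :=
    le_trans (norm_inner_le_norm _ _) (mul_le_mul_of_nonneg_left (T.le_opNorm a) (norm_nonneg _))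
  have h2 : ‖(⟪b, T (a - b)⟫_ℂ)‖ ≤ ‖b‖ * (‖T‖ * ‖a - b‖) :=
    le_trans (norm_inner_le_norm _ _) (mul_le_mul_of_nonneg_left (T.le_opNorm _) (norm_nonneg _))
  have hbound : ‖(⟪a, T a⟫_ℂ) - (⟪b, T b⟫_ℂ)‖ ≤ (‖a‖ + ‖b‖) * ‖T‖ * ‖a - b‖ := by
    rw [hsplit]
    calc ‖(⟪a - b, T a⟫_ℂ) + (⟪b, T (a - b)⟫_ℂ)‖
        ≤ ‖(⟪a - b, T a⟫_ℂ)‖ + ‖(⟪b, T (a - b)⟫_ℂ)‖ := norm_add_le _ _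
      _ ≤ ‖a - b‖ * (‖T‖ * ‖a‖) + ‖b‖ * (‖T‖ * ‖a - b‖) := add_le_add h1 h2
      _ = (‖a‖ + ‖b‖) * ‖T‖ * ‖a - b‖ := by ring
  -- assemble
  have hrpow : Real.sqrt K ^ (2*k-1) = K ^ ((k : ℝ) - 1/2) := by
    rw [Real.sqrt_eq_rpow, ← Real.rpow_natCast (K ^ ((1:ℝ)/2)) (2*k-1), ← Real.rpow_mul hK.le]
    congr 1
    have : ((2*k-1 : ℕ) : ℝ) = 2*(k:ℝ) - 1 := by
      have : (1:ℕ) ≤ 2*k := by omega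
      push_cast [Nat.cast_sub this]; ring
    rw [this]; ring
  have hfinal : (‖a‖ + ‖b‖) * ‖T‖ * ‖a - b‖
      ≤ (2 * Real.sqrt K ^ k) * ‖T‖ * (k * Real.sqrt K ^ (k-1) * ‖u - v‖) := by
    have hTn : (0:ℝ) ≤ ‖T‖ := norm_nonneg _
    have hs1 : ‖a‖ + ‖b‖ ≤ 2 * Real.sqrt K ^ k := by linarith
    have hd0 : (0:ℝ) ≤ ‖a - b‖ := norm_nonneg _
    have hd1 : (0:ℝ) ≤ k * Real.sqrt K ^ (k-1) * ‖u - v‖ :=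
      mul_nonneg (mul_nonneg (by positivity) (by positivity)) (norm_nonneg _)
    have hsk : (0:ℝ) ≤ 2 * Real.sqrt K ^ k := by positivity
    calc (‖a‖ + ‖b‖) * ‖T‖ * ‖a - b‖
        ≤ (2 * Real.sqrt K ^ k) * ‖T‖ * ‖a - b‖ := by
          apply mul_le_mul_of_nonneg_right _ hd0
          exact mul_le_mul_of_nonneg_right hs1 hTn
      _ ≤ (2 * Real.sqrt K ^ k) * ‖T‖ * (k * Real.sqrt K ^ (k-1) * ‖u - v‖) := by
          exact mul_le_mul_of_nonneg_left hdist (mul_nonneg hsk hTn)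
  have hpoweq : (2 * Real.sqrt K ^ k) * ‖T‖ * ((k:ℝ) * Real.sqrt K ^ (k-1) * ‖u - v‖)
      = 2 * k * K ^ ((k : ℝ) - 1/2) * ‖T‖ * ‖u - v‖ := by
    rw [← hrpow]
    have : Real.sqrt K ^ k * Real.sqrt K ^ (k-1) = Real.sqrt K ^ (2*k-1) := by
      rw [← pow_add]; congr 1; omega
    calc (2 * Real.sqrt K ^ k) * ‖T‖ * ((k:ℝ) * Real.sqrt K ^ (k-1) * ‖u - v‖)
        = 2 * (k:ℝ) * (Real.sqrt K ^ k * Real.sqrt K ^ (k-1)) * ‖T‖ * ‖u - v‖ := by ring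
      _ = 2 * (k:ℝ) * Real.sqrt K ^ (2*k-1) * ‖T‖ * ‖u - v‖ := by rw [this]
  calc ‖(⟪a, T a⟫_ℂ) - (⟪b, T b⟫_ℂ)‖ ≤ (‖a‖ + ‖b‖) * ‖T‖ * ‖a - b‖ := hbound
    _ ≤ (2 * Real.sqrt K ^ k) * ‖T‖ * (k * Real.sqrt K ^ (k-1) * ‖u - v‖) := hfinal
    _ = 2 * k * K ^ ((k : ℝ) - 1/2) * ‖T‖ * ‖u - v‖ := hpoweq
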